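/- Laplace transform of the renewal equation for Poissonian (exponential) resetting: let u : [0,∞) → ℝ be measurable, let r > 0 and s > 0 be reals, and assume t ↦ exp(−(s+r)·t) · |u(t)| is integrable on [0,∞). Define the resetting solution u_r(t) = exp(−r·t) · u(t) + ∫₀^t r · exp(−r·t') · u(t') dt'. Then t ↦ exp(−s·t) · u_r(t) is integrable on [0,∞) and ∫₀^∞ exp(−s·t) · u_r(t) dt = ((s + r)/s) · ∫₀^∞ exp(−(s+r)·t) · u(t) dt. -/

import Mathlib

open MeasureTheory Set

lemma exp_int_Ioi' (b a : ℝ) (hb : 0 < b) :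
    ∫ x in Ioi a, Real.exp (-b * x) = Real.exp (-b * a) / b := by
  have hderiv : ∀ x ∈ Ici a, HasDerivAt (fun x => -(Real.exp (-b * x) / b))
      (Real.exp (-b * x)) x := by
    intro x _
    have h1 : HasDerivAt (fun x : ℝ => -b * x) (-b) x := by
      simpa using (hasDerivAt_id x).const_mul (-b)
    have h2 : HasDerivAt (fun x => -(Real.exp (-b * x) / b)) (-(Real.exp (-b * x) * -b / b)) x :=
      (h1.exp.div_const b).neg
    convert h2 using 1
    rw [mul_neg, neg_div, neg_neg, mul_div_assoc, div_self hb.ne', mul_one]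
  have htend : Filter.Tendsto (fun x => -(Real.exp (-b * x) / b)) Filter.atTop (nhds 0) := by
    have h1 : Filter.Tendsto (fun x : ℝ => b * x) Filter.atTop Filter.atTop :=
      Filter.Tendsto.const_mul_atTop hb Filter.tendsto_id
    have h2 : Filter.Tendsto (fun x : ℝ => Real.exp (-(b * x))) Filter.atTop (nhds 0) :=
      Real.tendsto_exp_neg_atTop_nhds_zero.comp h1
    have h3 : Filter.Tendsto (fun x : ℝ => -(Real.exp (-(b * x)) / b)) Filter.atTop
        (nhds (-(0/b))) := by simpa [neg_div] using (h2.neg).div_const b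
    simpa [neg_mul] using h3
  have := integral_Ioi_of_hasDerivAt_of_tendsto' hderiv (exp_neg_integrableOn_Ioi a hb) htend
  rw [this]; ring

/-- Laplace transform of the renewal equation for Poissonian resetting:
if `u_r(t) = e^{-r t} u(t) + ∫₀^t r e^{-r t'} u(t') dt'`, then
`û_r(s) = ((s+r)/s) û(s+r)`. -/
theorem laplace_renewal_poissonian
    (u : ℝ → ℝ) (r s : ℝ) (hr : 0 < r) (hs : 0 < s)
    (hu_meas : Measurable u)
    (hu_int : IntegrableOn (fun t : ℝ => Real.exp (-(s + r) * t) * |u t|) (Ici (0 : ℝ)))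
    (ur : ℝ → ℝ)
    (hur : ∀ t : ℝ, ur t
      = Real.exp (-r * t) * u t + ∫ t' in (0:ℝ)..t, r * Real.exp (-r * t') * u t') :
    IntegrableOn (fun t : ℝ => Real.exp (-s * t) * ur t) (Ici (0 : ℝ)) ∧
      ∫ t in Ici (0 : ℝ), Real.exp (-s * t) * ur t
        = ((s + r) / s) * ∫ t in Ici (0 : ℝ), Real.exp (-(s + r) * t) * u t := by
  set w : ℝ → ℝ := fun t' => r * Real.exp (-r * t') * u t' with hw_def
  have hw_meas : Measurable w :=
    (measurable_const.mul ((measurable_id.const_mul (-r)).exp)).mul hu_meas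
  -- integrability of the base term
  have hA_int : IntegrableOn (fun t => Real.exp (-(s + r) * t) * u t) (Ici (0:ℝ)) := by
    refine hu_int.mono' ?_ ?_
    · exact (((measurable_id.const_mul (-(s+r))).exp).mul hu_meas).aestronglyMeasurable
    · filter_upwards with t
      rw [Real.norm_eq_abs, abs_mul, abs_of_pos (Real.exp_pos _)]
  -- the product-space function
  set S : Set (ℝ × ℝ) := {q : ℝ × ℝ | 0 < q.2 ∧ q.2 ≤ q.1} with hS_def
  have hS_meas : MeasurableSet S := by
    have h : S = {q : ℝ × ℝ | 0 < q.2} ∩ {q : ℝ × ℝ | q.2 ≤ q.1} := rfl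
    rw [h]
    exact (measurableSet_lt measurable_const measurable_snd).inter
      (measurableSet_le measurable_snd measurable_fst)
  set F : ℝ × ℝ → ℝ := fun q => Real.exp (-s * q.1) * S.indicator (fun q => w q.2) q
    with hF_def
  have hF_meas : Measurable F :=
    ((measurable_fst.const_mul (-s)).exp).mul ((hw_meas.comp measurable_snd).indicator hS_meas)
  have hsec : ∀ t t' : ℝ, F (t, t') = Real.exp (-s * t) * (Ioc (0:ℝ) t).indicator w t' := by
    intro t t'
    simp only [hF_def, Set.indicator_apply, hS_def, mem_setOf_eq, mem_Ioc]
  have hexp_int : IntegrableOn (fun t => Real.exp (-s * t)) (Ici (0:ℝ)) :=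
    (integrableOn_Ici_iff_integrableOn_Ioi (f := fun t : ℝ => Real.exp (-s * t)) (b := 0)).2
      (exp_neg_integrableOn_Ioi 0 hs)
  -- integrability of sections in the first variable
  have hsec_int : ∀ t' : ℝ, Integrable (fun t => F (t, t')) (volume.restrict (Ici (0:ℝ))) := by
    intro t'
    refine (hexp_int.mul_const |w t'|).mono' ?_ ?_
    · exact (hF_meas.comp (measurable_id.prodMk measurable_const)).aestronglyMeasurable
    · filter_upwards with t
      rw [hsec, Real.norm_eq_abs, abs_mul, abs_of_pos (Real.exp_pos _)]
      have hle : |(Ioc (0:ℝ) t).indicator w t'| ≤ |w t'| := by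
        by_cases h : t' ∈ Ioc (0:ℝ) t
        · rw [Set.indicator_of_mem h]
        · rw [Set.indicator_of_notMem h]; simp [abs_nonneg]
      exact mul_le_mul_of_nonneg_left hle (Real.exp_pos _).le
  -- key computation of the inner integral over t
  have key : ∀ (g : ℝ → ℝ), ∀ t' : ℝ,
      (∫ t in Ici (0:ℝ), Real.exp (-s * t) * (Ioc (0:ℝ) t).indicator g t')
        = (Ioi (0:ℝ)).indicator (fun x => g x * (Real.exp (-s * x) / s)) t' := by
    intro g t'
    by_cases ht' : 0 < t'
    · have h1 : ∀ t : ℝ, Real.exp (-s * t) * (Ioc (0:ℝ) t).indicator g t'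
          = (Ici t').indicator (fun t => Real.exp (-s * t) * g t') t := by
        intro t
        by_cases h : t' ≤ t
        · rw [Set.indicator_of_mem (mem_Ioc.2 ⟨ht', h⟩), Set.indicator_of_mem (mem_Ici.2 h)]
        · rw [Set.indicator_of_notMem (fun hc => h (mem_Ioc.1 hc).2),
            Set.indicator_of_notMem (fun hc => h (mem_Ici.1 hc)), mul_zero]
      simp_rw [h1]
      rw [integral_indicator measurableSet_Ici, Measure.restrict_restrict measurableSet_Ici,
        Ici_inter_Ici, max_eq_left ht'.le, integral_mul_const, integral_Ici_eq_integral_Ioi,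
        exp_int_Ioi' s t' hs, Set.indicator_of_mem (mem_Ioi.2 ht'), mul_comm]
    · have h1 : ∀ t : ℝ, Real.exp (-s * t) * (Ioc (0:ℝ) t).indicator g t' = 0 := by
        intro t
        rw [Set.indicator_of_notMem (fun hc => ht' (mem_Ioc.1 hc).1), mul_zero]
      simp_rw [h1]
      rw [integral_zero, Set.indicator_of_notMem (by simpa using ht')]
  -- pointwise identities relating w to u
  have hwu : ∀ x : ℝ, w x * (Real.exp (-s * x) / s) = (r/s) * (Real.exp (-(s+r)*x) * u x) := by
    intro x
    have he : Real.exp (-(s+r)*x) = Real.exp (-r*x) * Real.exp (-s*x) := by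
      rw [← Real.exp_add]; congr 1; ring
    rw [hw_def, he]; ring
  have hwabs : ∀ x : ℝ, |w x| * (Real.exp (-s * x) / s)
      = (r/s) * (Real.exp (-(s+r)*x) * |u x|) := by
    intro x
    have he : Real.exp (-(s+r)*x) = Real.exp (-r*x) * Real.exp (-s*x) := by
      rw [← Real.exp_add]; congr 1; ring
    rw [hw_def]
    rw [abs_mul, abs_mul, abs_of_pos hr, abs_of_pos (Real.exp_pos _), he]
    ring
  have hnorm : ∀ t t' : ℝ, ‖F (t, t')‖
      = Real.exp (-s * t) * (Ioc (0:ℝ) t).indicator (fun x => |w x|) t' := by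
    intro t t'
    rw [hsec, Real.norm_eq_abs, abs_mul, abs_of_pos (Real.exp_pos _)]
    congr 1
    by_cases h : t' ∈ Ioc (0:ℝ) t <;> simp [Set.indicator_of_mem, Set.indicator_of_notMem, h]
  -- integrability of F on the product space
  have hF_int : Integrable F ((volume.restrict (Ici (0:ℝ))).prod volume) := by
    rw [integrable_prod_iff' hF_meas.aestronglyMeasurable]
    constructor
    · filter_upwards with t' using hsec_int t'
    · have hind : Integrable ((Ioi (0:ℝ)).indicator
          (fun x => |w x| * (Real.exp (-s * x) / s))) volume := by
        rw [integrable_indicator_iff measurableSet_Ioi]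
        refine (((hu_int.mono_set Ioi_subset_Ici_self).const_mul (r/s)).congr ?_)
        filter_upwards with x using (hwabs x).symm
      refine hind.congr (Filter.Eventually.of_forall fun t' => ?_)
      simp_rw [hnorm]
      exact (key (fun x => |w x|) t').symm
  -- Fubini
  have hswap : (∫ t in Ici (0:ℝ), ∫ t', F (t, t'))
      = ∫ t', ∫ t in Ici (0:ℝ), F (t, t') :=
    integral_integral_swap hF_int
  -- identify the inner integral with the interval integral
  have hB_eq : ∀ t ∈ Ici (0:ℝ), (∫ t', F (t, t'))
      = Real.exp (-s * t) * ∫ t' in (0:ℝ)..t, w t' := by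
    intro t ht
    rw [intervalIntegral.integral_of_le ht]
    simp_rw [hsec]
    rw [integral_const_mul, integral_indicator measurableSet_Ioc]
  -- value of the swapped integral
  have hRHS : (∫ t' : ℝ, ∫ t in Ici (0:ℝ), F (t, t'))
      = (r/s) * ∫ t in Ici (0:ℝ), Real.exp (-(s+r)*t) * u t := by
    have h1 : ∀ t' : ℝ, (∫ t in Ici (0:ℝ), F (t, t'))
        = (Ioi (0:ℝ)).indicator (fun x => w x * (Real.exp (-s * x) / s)) t' := by
      intro t'
      simp_rw [hsec]
      exact key w t'
    simp_rw [h1]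
    rw [integral_indicator measurableSet_Ioi]
    simp_rw [hwu]
    rw [integral_const_mul, ← integral_Ici_eq_integral_Ioi]
  -- integrability of the convolution term
  have hB_int : IntegrableOn (fun t => Real.exp (-s * t) * ∫ t' in (0:ℝ)..t, w t')
      (Ici (0:ℝ)) := by
    refine hF_int.integral_prod_left.congr ?_
    exact (ae_restrict_iff' measurableSet_Ici).2 (Filter.Eventually.of_forall hB_eq)
  -- total pointwise decomposition
  have htot : ∀ t : ℝ, Real.exp (-s * t) * ur t
      = Real.exp (-(s+r)*t) * u t + Real.exp (-s * t) * ∫ t' in (0:ℝ)..t, w t' := by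
    intro t
    have he : Real.exp (-s*t) * Real.exp (-r*t) = Real.exp (-(s+r)*t) := by
      rw [← Real.exp_add]; congr 1; ring
    rw [hur t, mul_add, ← mul_assoc, he]
  have hint : IntegrableOn (fun t => Real.exp (-s * t) * ur t) (Ici (0:ℝ)) :=
    (hA_int.add hB_int).congr (Filter.Eventually.of_forall fun t => (htot t).symm)
  refine ⟨hint, ?_⟩
  have hBval : (∫ t in Ici (0:ℝ), Real.exp (-s * t) * ∫ t' in (0:ℝ)..t, w t')
      = (r/s) * ∫ t in Ici (0:ℝ), Real.exp (-(s+r)*t) * u t := by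
    rw [← hRHS, ← hswap]
    exact (setIntegral_congr_fun measurableSet_Ici fun t ht => (hB_eq t ht).symm)
  calc ∫ t in Ici (0:ℝ), Real.exp (-s * t) * ur t
      = ∫ t in Ici (0:ℝ), (Real.exp (-(s+r)*t) * u t
          + Real.exp (-s * t) * ∫ t' in (0:ℝ)..t, w t') := by simp_rw [htot]
    _ = (∫ t in Ici (0:ℝ), Real.exp (-(s+r)*t) * u t)
          + ∫ t in Ici (0:ℝ), Real.exp (-s * t) * ∫ t' in (0:ℝ)..t, w t' :=
        integral_add hA_int hB_int
    _ = ((s + r) / s) * ∫ t in Ici (0:ℝ), Real.exp (-(s + r) * t) * u t := by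
        rw [hBval]
        field_simp
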